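/- Let P be a finite set of points in ℝ² and let D be a closed disk with |D ∩ P| = j. Then for every integer i with 0 ≤ i ≤ j there exists a closed disk D' such that D' ∩ P ⊆ D ∩ P and |D' ∩ P| = i. -/

import Mathlib

/-- Auxiliary lemma: if a closed disk contains at least two points of a finite
set `P`, we can find a smaller disk (in the sense of intersection with `P`)
containing exactly one fewer point of `P`. -/
lemma disk_remove_one {E : Type*} [NormedAddCommGroup E] [InnerProductSpace ℝ E]
    (P : Set E) (hP : P.Finite) (c : E) (r : ℝ)
    (h2 : 2 ≤ (P ∩ Metric.closedBall c r).ncard) :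
    ∃ (c' : E) (r' : ℝ), 0 ≤ r' ∧
      P ∩ Metric.closedBall c' r' ⊆ P ∩ Metric.closedBall c r ∧
      (P ∩ Metric.closedBall c' r').ncard = (P ∩ Metric.closedBall c r).ncard - 1 := by
  set S := P ∩ Metric.closedBall c r with hSdef
  have hSfin : S.Finite := hP.inter_of_left _
  have hSne : S.Nonempty := Set.nonempty_of_ncard_ne_zero (by omega)
  -- two distinct points in S
  obtain ⟨a, haS, b, hbS, hab⟩ := (Set.one_lt_ncard hSfin).mp (by omega)
  -- farthest point p
  obtain ⟨p, hpS, hpmax⟩ := Set.exists_max_image S (fun q => dist q c) hSfin hSne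
  set R := dist p c with hRdef
  have hR0 : 0 < R := by
    rcases lt_or_eq_of_le (dist_nonneg : (0:ℝ) ≤ R) with h | h
    · exact h
    · exfalso
      have ha : dist a c = 0 := le_antisymm (h ▸ hpmax a haS) dist_nonneg
      have hb : dist b c = 0 := le_antisymm (h ▸ hpmax b hbS) dist_nonneg
      exact hab (by rw [dist_eq_zero] at ha hb; rw [ha, hb])
  have hRr : R ≤ r := hpS.2
  -- margin ε
  obtain ⟨ε, hε, hεP⟩ : ∃ ε : ℝ, 0 < ε ∧ ∀ x ∈ P, r < dist x c → r + 2 * ε ≤ dist x c := by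
    by_cases hT : (P \ Metric.closedBall c r).Nonempty
    · obtain ⟨x0, hx0, hmin⟩ := Set.exists_min_image _ (fun x => dist x c)
        hP.diff hT
      have hx0r : r < dist x0 c := by
        have := hx0.2
        simpa [Metric.mem_closedBall, not_le] using this
      refine ⟨(dist x0 c - r) / 2, by linarith, fun x hx hxr => ?_⟩
      have : dist x0 c ≤ dist x c := hmin x ⟨hx, by simpa [Metric.mem_closedBall, not_le]⟩
      linarith
    · refine ⟨1, one_pos, fun x hx hxr => ?_⟩
      have hmem : x ∈ P \ Metric.closedBall c r :=
        ⟨hx, by simp [Metric.mem_closedBall, not_le, hxr]⟩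
      exact absurd ⟨x, hmem⟩ hT
  -- perturbed center
  set c' := c - (ε / R) • (p - c) with hc'def
  have hεR : 0 < ε / R := div_pos hε hR0
  have hnormpc : ‖p - c‖ = R := by rw [hRdef, dist_eq_norm]
  have hcc' : dist c c' = ε := by
    rw [dist_eq_norm, hc'def]
    have : c - (c - (ε / R) • (p - c)) = (ε / R) • (p - c) := by abel
    rw [this, norm_smul, hnormpc, Real.norm_eq_abs, abs_of_pos hεR]
    field_simp
  have hp' : dist p c' = R + ε := by
    rw [dist_eq_norm, hc'def]
    have : p - (c - (ε / R) • (p - c)) = (1 + ε / R) • (p - c) := by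
      rw [add_smul, one_smul]; abel
    rw [this, norm_smul, hnormpc, Real.norm_eq_abs, abs_of_pos (by positivity)]
    field_simp
  -- all other points of S are strictly closer to c' than R + ε
  have hq' : ∀ q ∈ S, q ≠ p → dist q c' < R + ε := by
    intro q hqS hqp
    rcases lt_or_eq_of_le (hpmax q hqS) with h | h
    · calc dist q c' ≤ dist q c + dist c c' := dist_triangle q c c'
        _ = dist q c + ε := by rw [hcc']
        _ < R + ε := by linarith
    · -- dist q c = R
      have hnormqc : ‖q - c‖ = R := by rw [← h, dist_eq_norm]
      have hip : inner ℝ (q - c) (p - c) < R * R := by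
        rcases lt_or_eq_of_le (real_inner_le_norm (q - c) (p - c)) with h' | h'
        · calc (inner ℝ (q - c) (p - c) : ℝ) < ‖q - c‖ * ‖p - c‖ := h'
            _ = R * R := by rw [hnormqc, hnormpc]
        · exfalso
          have := inner_eq_norm_mul_iff_real.mp h'
          rw [hnormqc, hnormpc] at this
          have : q - c = p - c := smul_right_injective E (ne_of_gt hR0) this
          exact hqp (by have := congrArg (· + c) this; simpa using this)
      have hsq : ‖q - c'‖ ^ 2 < (R + ε) ^ 2 := by
        have hrewrite : q - c' = (q - c) + (ε / R) • (p - c) := by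
          rw [hc'def]; abel
        rw [hrewrite, norm_add_sq_real, real_inner_smul_right, norm_smul,
          Real.norm_eq_abs, abs_of_pos hεR, hnormqc, hnormpc]
        have h1 : ε / R * inner ℝ (q - c) (p - c) < ε / R * (R * R) := by
          exact mul_lt_mul_of_pos_left hip hεR
        have h2 : ε / R * (R * R) = ε * R := by field_simp
        have h3 : (ε / R * R) = ε := by field_simp
        nlinarith [hip, hεR, hR0, hε]
      have : ‖q - c'‖ < R + ε :=
        lt_of_pow_lt_pow_left₀ 2 (by positivity) hsq
      rwa [dist_eq_norm]
  -- new radius: farthest distance among S \ {p}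
  have hS'ne : (S \ {p}).Nonempty := by
    rcases eq_or_ne a p with rfl | hap
    · exact ⟨b, hbS, fun h => hab (Set.mem_singleton_iff.mp h).symm⟩
    · exact ⟨a, haS, fun h => hap (Set.mem_singleton_iff.mp h)⟩
  obtain ⟨m, hmS', hmmax⟩ := Set.exists_max_image (S \ {p}) (fun q => dist q c')
    hSfin.diff hS'ne
  set r' := dist m c' with hr'def
  have hr'0 : (0:ℝ) ≤ r' := dist_nonneg
  have hr'lt : r' < R + ε := hq' m hmS'.1 (by simpa using hmS'.2)
  -- key set equality
  have hkey : P ∩ Metric.closedBall c' r' = S \ {p} := by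
    ext x
    constructor
    · rintro ⟨hxP, hx⟩
      rw [Metric.mem_closedBall] at hx
      have hxc : dist x c ≤ r' + ε := by
        calc dist x c ≤ dist x c' + dist c' c := dist_triangle x c' c
          _ = dist x c' + ε := by rw [dist_comm c' c, hcc']
          _ ≤ r' + ε := by linarith
      have hxS : x ∈ S := by
        refine ⟨hxP, ?_⟩
        rw [Metric.mem_closedBall]
        by_contra h
        push_neg at h
        have := hεP x hxP h
        linarith
      refine ⟨hxS, ?_⟩
      simp only [Set.mem_singleton_iff]
      intro hxp
      rw [hxp] at hx
      rw [hp'] at hx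
      linarith
    · rintro ⟨hqS, hqp⟩
      exact ⟨hqS.1, Metric.mem_closedBall.mpr (hmmax x ⟨hqS, hqp⟩)⟩
  refine ⟨c', r', hr'0, ?_, ?_⟩
  · rw [hkey]; exact (Set.diff_subset).trans (le_refl S)
  · rw [hkey, Set.ncard_diff_singleton_of_mem hpS]

/-- Shrinking lemma for disks: if a closed disk `D` contains
exactly `j` points of a finite planar point set `P`, then for every `0 ≤ i ≤ j`
there is a closed disk `D'` with `D' ∩ P ⊆ D ∩ P` and `|D' ∩ P| = i`. -/
theorem disk_shrinking
    (P : Set (EuclideanSpace ℝ (Fin 2))) (hP : P.Finite)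
    (c : EuclideanSpace ℝ (Fin 2)) (r : ℝ) (hr : 0 ≤ r)
    (j : ℕ) (hcard : (P ∩ Metric.closedBall c r).ncard = j) :
    ∀ i : ℕ, i ≤ j →
      ∃ (c' : EuclideanSpace ℝ (Fin 2)) (r' : ℝ), 0 ≤ r' ∧
        P ∩ Metric.closedBall c' r' ⊆ P ∩ Metric.closedBall c r ∧
        (P ∩ Metric.closedBall c' r').ncard = i := by
  intro i hi
  rcases Nat.eq_zero_or_pos i with rfl | hi0
  · -- i = 0 : take a degenerate disk at a point not in P
    have : Infinite (EuclideanSpace ℝ (Fin 2)) := Infinite.of_injective (WithLp.toLp 2 : (Fin 2 → ℝ) → _) (WithLp.toLp_injective 2)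
    obtain ⟨c', hc'⟩ := hP.infinite_compl.nonempty
    have hempty : P ∩ Metric.closedBall c' 0 = ∅ := by
      rw [Metric.closedBall_zero]
      exact Set.inter_singleton_eq_empty.mpr hc'
    exact ⟨c', 0, le_refl 0, by rw [hempty]; exact Set.empty_subset _,
      by rw [hempty]; simp⟩
  · induction j generalizing c r with
    | zero => omega
    | succ n ih =>
      rcases eq_or_lt_of_le hi with rfl | hlt
      · exact ⟨c, r, hr, le_refl _, hcard⟩
      · have hin : i ≤ n := Nat.lt_succ_iff.mp hlt
        have h2 : 2 ≤ (P ∩ Metric.closedBall c r).ncard := by omega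
        obtain ⟨c1, r1, hr1, hsub1, hcard1⟩ := disk_remove_one P hP c r h2
        have hcard1' : (P ∩ Metric.closedBall c1 r1).ncard = n := by omega
        obtain ⟨c2, r2, hr2, hsub2, hcard2⟩ := ih c1 r1 hr1 hcard1' hin
        exact ⟨c2, r2, hr2, hsub2.trans hsub1, hcard2⟩
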